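/- Stopping time lemma: Let μ be doubling, q ∈ [1,∞), α > 0. There exist M > 0 and c > 0, depending only on q, α and the doubling constant, such that for every measurable function g on X⁺ and every open ball B ⊂ X of radius r, μ{x ∈ B : A_q^α(g|r)(x) ≤ M · C_q^α(g)(x)} ≥ c · μ(B). -/

import Mathlib

open MeasureTheory Metric Set
open scoped ENNReal NNReal

noncomputable section

variable {X : Type*}

/-- The measure `dμ(y) dt/t` on `X⁺ = X × (0,∞)`, modelled on `X × ℝ`
(supported on `{t > 0}`). -/
def upHalf [MeasurableSpace X] (μ : Measure X) : Measure (X × ℝ) :=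
  μ.prod ((volume.restrict (Set.Ioi (0:ℝ))).withDensity fun t => ENNReal.ofReal t⁻¹)

/-- The measure `dμ(y) dt` on `X⁺` (supported on `{t > 0}`). -/
def upHalf' [MeasurableSpace X] (μ : Measure X) : Measure (X × ℝ) :=
  μ.prod (volume.restrict (Set.Ioi (0:ℝ)))

/-- Cone of aperture `α` with vertex `x`. -/
def coneAt [PseudoMetricSpace X] (α : ℝ) (x : X) : Set (X × ℝ) :=
  {p | dist p.1 x < α * p.2}

/-- Tent of aperture `α` over `O ⊆ X`: the complement in `X⁺` of the union of the
cones of aperture `α` with vertices outside `O`. -/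
def tentOver [PseudoMetricSpace X] (α : ℝ) (O : Set X) : Set (X × ℝ) :=
  {p | 0 < p.2 ∧ ∀ x ∉ O, α * p.2 ≤ dist p.1 x}

/-- The `α`-shadow of `C ⊆ X⁺`: points whose cone meets `C`. -/
def shadowOf [PseudoMetricSpace X] (α : ℝ) (C : Set (X × ℝ)) : Set X :=
  {x | ∃ p ∈ C, p ∈ coneAt α x}

/-- The operator `A_q^α`:
`A_q^α(f)(x) = (∬_{Γ^α(x)} |f(y,t)|^q dμ(y)/V(y,αt) dt/t)^{1/q}`. -/
def Afun [PseudoMetricSpace X] [MeasurableSpace X] (μ : Measure X) (q α : ℝ)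
    (f : X × ℝ → ℝ) (x : X) : ℝ≥0∞ :=
  (∫⁻ p in coneAt α x,
      ENNReal.ofReal (|f p| ^ q) / μ (ball p.1 (α * p.2)) ∂upHalf μ) ^ (1/q)

/-- The truncated operator `A_q^α(·|h)`, integrating over the truncated cone
`Γ_h^α(x)`. -/
def AfunT [PseudoMetricSpace X] [MeasurableSpace X] (μ : Measure X) (q α h : ℝ)
    (f : X × ℝ → ℝ) (x : X) : ℝ≥0∞ :=
  (∫⁻ p in coneAt α x ∩ {p : X × ℝ | p.2 < h},
      ENNReal.ofReal (|f p| ^ q) / μ (ball p.1 (α * p.2)) ∂upHalf μ) ^ (1/q)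

/-- The Carleson operator `C_q^α`:
`C_q^α(f)(x) = sup_{B ∋ x} (μ(B)⁻¹ ∬_{T^α(B)} |f(y,t)|^q dμ(y) dt/t)^{1/q}`,
the supremum being over open balls containing `x`. -/
def Cfun [PseudoMetricSpace X] [MeasurableSpace X] (μ : Measure X) (q α : ℝ)
    (f : X × ℝ → ℝ) (x : X) : ℝ≥0∞ :=
  ⨆ (z : X) (ρ : ℝ) (_ : 0 < ρ ∧ x ∈ ball z ρ),
    ((μ (ball z ρ))⁻¹ *
      ∫⁻ p in tentOver α (ball z ρ), ENNReal.ofReal (|f p| ^ q) ∂upHalf μ) ^ (1/q)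

/-- The tent space quasi-norm `‖f‖_{T^{p,q,α}} = ‖A_q^α(f)‖_{L^p(X)}`. -/
def tNorm [PseudoMetricSpace X] [MeasurableSpace X] (μ : Measure X) (p q α : ℝ)
    (f : X × ℝ → ℝ) : ℝ≥0∞ :=
  (∫⁻ x, Afun μ q α f x ^ p ∂μ) ^ (1/p)

/-- The uncentred Hardy–Littlewood maximal operator applied to an
`ℝ≥0∞`-valued function. -/
def maxFun [PseudoMetricSpace X] [MeasurableSpace X] (μ : Measure X)
    (g : X → ℝ≥0∞) (x : X) : ℝ≥0∞ :=
  ⨆ (z : X) (ρ : ℝ) (_ : 0 < ρ ∧ x ∈ ball z ρ),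
    (μ (ball z ρ))⁻¹ * ∫⁻ y in ball z ρ, g y ∂μ

/-- `μ` is doubling: `V(x,2r) ≤ C V(x,r)` for all `x`, `r > 0`. -/
def DoublingMeas [PseudoMetricSpace X] [MeasurableSpace X] (μ : Measure X) : Prop :=
  ∃ C > (0:ℝ), ∀ (x : X) (r : ℝ), 0 < r →
    μ (ball x (2 * r)) ≤ ENNReal.ofReal C * μ (ball x r)

/-- A metric space carrying a sigma-finite measure giving positive mass to every
ball is second countable. -/
theorem secondCountable_of_sigmaFinite_posBalls [MetricSpace X] [MeasurableSpace X]
    [BorelSpace X] (μ : Measure X) [SigmaFinite μ]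
    (hpos : ∀ (x : X) (r : ℝ), 0 < r → 0 < μ (ball x r)) :
    SecondCountableTopology X := by
  apply Metric.secondCountable_of_almost_dense_set
  intro ε hε
  obtain ⟨m, hm⟩ := zorn_subset {s : Set X | s.Pairwise fun a b => ε ≤ dist a b}
    (fun c hcS hchain =>
      ⟨⋃₀ c, (Set.pairwise_sUnion hchain.directedOn).2 fun s hs => hcS hs,
        fun s hs => Set.subset_sUnion_of_mem hs⟩)
  refine ⟨m, ?_, ?_⟩
  · -- countability of the maximal separated set
    have hdisj : Pairwise (Function.onFun Disjoint fun y : m => ball (y : X) (ε / 2)) := by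
      intro i j hij
      have hsep : ε ≤ dist (i : X) j :=
        hm.prop i.2 j.2 (fun h => hij (Subtype.ext h))
      refine Set.disjoint_left.2 fun w hwi hwj => ?_
      rw [mem_ball] at hwi hwj
      have h1 : dist (i : X) (j : X) ≤ dist (i : X) w + dist w (j : X) := dist_triangle _ _ _
      rw [dist_comm (i : X) w] at h1
      linarith
    have hcnt := MeasureTheory.Measure.countable_meas_pos_of_disjoint_iUnion (μ := μ)
      (As := fun y : m => ball (y : X) (ε / 2)) (fun _ => measurableSet_ball) hdisj
    have huniv : (Set.univ : Set m).Countable :=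
      hcnt.mono fun i _ => hpos _ _ (by linarith)
    have : Countable m := Set.countable_univ_iff.1 huniv
    exact Set.countable_coe_iff.1 this
  · -- m is an ε-net
    intro x
    by_contra h
    push_neg at h
    have hins : (insert x m) ∈ {s : Set X | s.Pairwise fun a b => ε ≤ dist a b} := by
      haveI : Std.Symm (fun a b : X => ε ≤ dist a b) := by
        constructor
        intro a b hab
        rwa [dist_comm]
      exact Set.pairwise_insert_of_symm.2 ⟨hm.prop, fun b hb _ => (h b hb).le⟩
    have hxm : x ∈ m := hm.2 hins (Set.subset_insert x m) (Set.mem_insert x m)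
    have := h x hxm
    simp at this
    exact absurd this.le (not_le.2 hε)

/-- The key geometric fact: a point of a cone truncated at height `r` with vertex in
`ball z r` lies in the tent over `ball z ((2*α+1)*r)`. -/
theorem mem_tentOver_of_cone [MetricSpace X] {α r : ℝ} (hα : 0 < α) {z x : X} {p : X × ℝ}
    (hx : x ∈ ball z r) (h1 : dist p.1 x < α * p.2) (h2 : p.2 < r) :
    p ∈ tentOver α (ball z ((2 * α + 1) * r)) := by
  have hd : (0 : ℝ) ≤ dist p.1 x := dist_nonneg
  have ht : 0 < p.2 := by nlinarith [hα]
  refine ⟨ht, fun y hy => ?_⟩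
  rw [mem_ball, not_lt] at hy
  rw [mem_ball] at hx
  have t1 : dist y z ≤ dist y p.1 + dist p.1 z := dist_triangle _ _ _
  have t2 : dist p.1 z ≤ dist p.1 x + dist x z := dist_triangle _ _ _
  rw [dist_comm p.1 y]
  nlinarith [mul_le_mul_of_nonneg_left h2.le hα.le]

/-- Iterated doubling. -/
theorem doubling_iter [MetricSpace X] [MeasurableSpace X] {μ : Measure X} {C : ℝ}
    (hdb : ∀ (x : X) (r : ℝ), 0 < r → μ (ball x (2 * r)) ≤ ENNReal.ofReal C * μ (ball x r)) :
    ∀ (k : ℕ) (x : X) (r : ℝ), 0 < r →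
      μ (ball x (2 ^ k * r)) ≤ ENNReal.ofReal C ^ k * μ (ball x r) := by
  intro k
  induction k with
  | zero => intro x r _; simp
  | succ k ih =>
      intro x r hr
      have h1 : (2 : ℝ) ^ (k + 1) * r = 2 * (2 ^ k * r) := by ring
      have h2 : (0 : ℝ) < 2 ^ k * r := by positivity
      calc μ (ball x (2 ^ (k + 1) * r)) = μ (ball x (2 * (2 ^ k * r))) := by rw [h1]
        _ ≤ ENNReal.ofReal C * μ (ball x (2 ^ k * r)) := hdb x _ h2
        _ ≤ ENNReal.ofReal C * (ENNReal.ofReal C ^ k * μ (ball x r)) :=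
            mul_le_mul_right (ih x r hr) _
        _ = ENNReal.ofReal C ^ (k + 1) * μ (ball x r) := by ring

/-- **Stopping time lemma.** If `μ` is doubling, `q ∈ [1,∞)` and `α > 0`, there
exist `M, c > 0` (depending only on `q`, `α` and the doubling constant) such
that for every measurable `g` on `X⁺` and every open ball `B = B(z,r)`,
`μ{x ∈ B : A_q^α(g|r)(x) ≤ M C_q^α(g)(x)} ≥ c μ(B)`. -/
theorem stopping_time_lemma [MetricSpace X] [MeasurableSpace X] [BorelSpace X]
    (μ : Measure X) [SigmaFinite μ]
    (hpos : ∀ (x : X) (r : ℝ), 0 < r → 0 < μ (ball x r))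
    (hfin : ∀ (x : X) (r : ℝ), 0 < r → μ (ball x r) < ∞)
    (hdb : DoublingMeas μ)
    (q α : ℝ) (hq : 1 ≤ q) (hα : 0 < α) :
    ∃ M > (0:ℝ), ∃ c > (0:ℝ), ∀ g : X × ℝ → ℝ, Measurable g →
      ∀ (z : X) (r : ℝ), 0 < r →
        ENNReal.ofReal c * μ (ball z r)
          ≤ μ {x ∈ ball z r |
              AfunT μ q α r g x ≤ ENNReal.ofReal M * Cfun μ q α g x} := by
  classical
  haveI : SecondCountableTopology X := secondCountable_of_sigmaFinite_posBalls μ hpos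
  haveI : SigmaFinite (upHalf μ) := by unfold upHalf; infer_instance
  obtain ⟨C₀, hC₀, hdb₀⟩ := hdb
  set C : ℝ := max C₀ 1 with hCdef
  have hC1 : (1 : ℝ) ≤ C := le_max_right _ _
  have hdbC : ∀ (x : X) (r : ℝ), 0 < r →
      μ (ball x (2 * r)) ≤ ENNReal.ofReal C * μ (ball x r) := fun x r hr =>
    (hdb₀ x r hr).trans
      (mul_le_mul_left (ENNReal.ofReal_le_ofReal (le_max_left _ _)) _)
  obtain ⟨k, hk⟩ : ∃ k : ℕ, 2 * α + 1 ≤ 2 ^ k := by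
    obtain ⟨k, hk⟩ := pow_unbounded_of_one_lt (2 * α + 1) (one_lt_two (α := ℝ))
    exact ⟨k, hk.le⟩
  set D : ℝ := C ^ k with hDdef
  have hD1 : (1 : ℝ) ≤ D := one_le_pow₀ hC1
  have hD0 : (0 : ℝ) < 2 * D := by linarith
  have hq0 : (0 : ℝ) < q := lt_of_lt_of_le one_pos hq
  have hqinv : (0 : ℝ) < 1 / q := by positivity
  refine ⟨(2 * D) ^ (1 / q), Real.rpow_pos_of_pos hD0 _, 1 / 2, by norm_num, ?_⟩
  intro g hg z r hr
  set R : ℝ := (2 * α + 1) * r with hRdef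
  have hR : 0 < R := by nlinarith
  have hrR : r ≤ R := by nlinarith
  have hfinB' : μ (ball z R) < ∞ := hfin z R hR
  have hposB' : 0 < μ (ball z R) := hpos z R hR
  have hfinB : μ (ball z r) < ∞ := hfin z r hr
  -- doubling comparison of B' = ball z R with B = ball z r
  have hBB' : μ (ball z R) ≤ ENNReal.ofReal D * μ (ball z r) := by
    calc μ (ball z R) ≤ μ (ball z (2 ^ k * r)) :=
          measure_mono (ball_subset_ball (by nlinarith))
      _ ≤ ENNReal.ofReal C ^ k * μ (ball z r) := doubling_iter hdbC k z r hr
      _ = ENNReal.ofReal D * μ (ball z r) := by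
          rw [hDdef, ENNReal.ofReal_pow (by linarith : (0:ℝ) ≤ C)]
  set K : ℝ≥0∞ :=
    ∫⁻ p in tentOver α (ball z R), ENNReal.ofReal (|g p| ^ q) ∂upHalf μ with hK
  -- lower bound for the Carleson functional on B
  have hCf : ∀ x ∈ ball z r, ((μ (ball z R))⁻¹ * K) ^ (1 / q) ≤ Cfun μ q α g x := by
    intro x hx
    have hx' : x ∈ ball z R := ball_subset_ball hrR hx
    exact le_iSup_of_le z (le_iSup_of_le R (le_iSup_of_le ⟨hR, hx'⟩ le_rfl))
  -- measurability infrastructure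
  have hGq : Measurable fun p : X × ℝ => ENNReal.ofReal (|g p| ^ q) :=
    ENNReal.measurable_ofReal.comp ((Real.continuous_rpow_const hq0.le).measurable.comp hg.abs)
  have hV : Measurable fun p : X × ℝ => μ (ball p.1 (α * p.2)) := by
    have hA : MeasurableSet {w : (X × ℝ) × X | dist w.2 w.1.1 < α * w.1.2} :=
      measurableSet_lt (measurable_snd.dist measurable_fst.fst)
        (measurable_fst.snd.const_mul α)
    exact measurable_measure_prodMk_left hA
  have hFm : Measurable fun p : X × ℝ =>
      ENNReal.ofReal (|g p| ^ q) / μ (ball p.1 (α * p.2)) := hGq.div hV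
  set H : X × (X × ℝ) → ℝ≥0∞ := fun w =>
    Set.indicator {w : X × (X × ℝ) | dist w.2.1 w.1 < α * w.2.2 ∧ w.2.2 < r}
      (fun w => ENNReal.ofReal (|g w.2| ^ q) / μ (ball w.2.1 (α * w.2.2))) w with hH
  have hUm : MeasurableSet {w : X × (X × ℝ) | dist w.2.1 w.1 < α * w.2.2 ∧ w.2.2 < r} :=
    (measurableSet_lt (measurable_snd.fst.dist measurable_fst)
        (measurable_snd.snd.const_mul α)).inter
      (measurableSet_lt measurable_snd.snd measurable_const)
  have hHm : Measurable H := (hFm.comp measurable_snd).indicator hUm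
  have hfm : Measurable fun x : X => ∫⁻ p, H (x, p) ∂upHalf μ := hHm.lintegral_prod_right'
  -- rewrite AfunT via H
  have hfeq : ∀ x : X, AfunT μ q α r g x = (∫⁻ p, H (x, p) ∂upHalf μ) ^ (1 / q) := by
    intro x
    unfold AfunT
    congr 1
    have hs : MeasurableSet (coneAt α x ∩ {p : X × ℝ | p.2 < r}) :=
      (measurableSet_lt (measurable_fst.dist measurable_const)
          (measurable_snd.const_mul α)).inter
        (measurableSet_lt measurable_snd measurable_const)
    rw [← lintegral_indicator hs _]
    simp only [hH]
    congr 1 with p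
  -- the tent is measurable
  have hT : MeasurableSet (tentOver α (ball z R)) := by
    have h2 : IsClosed {p : X × ℝ | ∀ x, x ∉ ball z R → α * p.2 ≤ dist p.1 x} := by
      rw [Set.setOf_forall]
      refine isClosed_iInter fun x => ?_
      by_cases hx : x ∈ ball z R
      · have : {p : X × ℝ | x ∉ ball z R → α * p.2 ≤ dist p.1 x} = Set.univ := by
          ext p; simp [hx]
        rw [this]; exact isClosed_univ
      · have : {p : X × ℝ | x ∉ ball z R → α * p.2 ≤ dist p.1 x}
            = {p : X × ℝ | α * p.2 ≤ dist p.1 x} := by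
          ext p; simp [hx]
        rw [this]
        exact isClosed_le (continuous_const.mul continuous_snd)
          (continuous_fst.dist continuous_const)
    have : tentOver α (ball z R)
        = {p : X × ℝ | 0 < p.2} ∩ {p : X × ℝ | ∀ x, x ∉ ball z R → α * p.2 ≤ dist p.1 x} :=
      rfl
    rw [this]
    exact (measurableSet_lt measurable_const measurable_snd).inter h2.measurableSet
  -- pointwise inner bound
  have hinner : ∀ p : X × ℝ, (∫⁻ x in ball z r, H (x, p) ∂μ)
      ≤ Set.indicator (tentOver α (ball z R)) (fun p => ENNReal.ofReal (|g p| ^ q)) p := by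
    intro p
    by_cases hp : ∃ x ∈ ball z r, dist p.1 x < α * p.2 ∧ p.2 < r
    · obtain ⟨x₀, hx₀, hd, ht⟩ := hp
      have hpT : p ∈ tentOver α (ball z R) := mem_tentOver_of_cone hα hx₀ hd ht
      rw [Set.indicator_of_mem hpT]
      have hpt : ∀ x : X, H (x, p) ≤ Set.indicator (ball p.1 (α * p.2))
          (fun _ => ENNReal.ofReal (|g p| ^ q) / μ (ball p.1 (α * p.2))) x := by
        intro x
        simp only [hH]
        by_cases hxp : dist p.1 x < α * p.2 ∧ p.2 < r
        · rw [Set.indicator_of_mem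
            (show (x, p) ∈ {w : X × (X × ℝ) | dist w.2.1 w.1 < α * w.2.2 ∧ w.2.2 < r} from hxp),
            Set.indicator_of_mem (show x ∈ ball p.1 (α * p.2) by
              rw [mem_ball, dist_comm]; exact hxp.1)]
        · rw [Set.indicator_of_notMem
            (show (x, p) ∉ {w : X × (X × ℝ) | dist w.2.1 w.1 < α * w.2.2 ∧ w.2.2 < r} from hxp)]
          exact zero_le
      calc (∫⁻ x in ball z r, H (x, p) ∂μ)
          ≤ ∫⁻ x in ball z r, Set.indicator (ball p.1 (α * p.2))
              (fun _ => ENNReal.ofReal (|g p| ^ q) / μ (ball p.1 (α * p.2))) x ∂μ :=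
            lintegral_mono hpt
        _ ≤ ∫⁻ x, Set.indicator (ball p.1 (α * p.2))
              (fun _ => ENNReal.ofReal (|g p| ^ q) / μ (ball p.1 (α * p.2))) x ∂μ :=
            setLIntegral_le_lintegral _ _
        _ = ENNReal.ofReal (|g p| ^ q) / μ (ball p.1 (α * p.2))
              * μ (ball p.1 (α * p.2)) := by
            rw [lintegral_indicator measurableSet_ball, setLIntegral_const]
        _ ≤ ENNReal.ofReal (|g p| ^ q) := by
            rw [div_eq_mul_inv, mul_assoc]
            calc ENNReal.ofReal (|g p| ^ q) * ((μ (ball p.1 (α * p.2)))⁻¹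
                  * μ (ball p.1 (α * p.2)))
                ≤ ENNReal.ofReal (|g p| ^ q) * 1 := by
                  refine mul_le_mul_right ?_ _
                  rw [mul_comm]
                  exact ENNReal.mul_inv_le_one _
              _ = ENNReal.ofReal (|g p| ^ q) := mul_one _
    · push_neg at hp
      have h0 : ∀ x ∈ ball z r, H (x, p) = 0 := by
        intro x hx
        simp only [hH]
        exact Set.indicator_of_notMem
          (show (x, p) ∉ {w : X × (X × ℝ) | dist w.2.1 w.1 < α * w.2.2 ∧ w.2.2 < r}
            from fun hmem => absurd hmem.2 (not_lt.2 (hp x hx hmem.1))) _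
      have : (∫⁻ x in ball z r, H (x, p) ∂μ) = 0 := by
        rw [setLIntegral_congr_fun measurableSet_ball
          (fun x hx => h0 x hx)]
        simp
      rw [this]
      exact zero_le
  -- the main integral estimate
  have hmain : (∫⁻ x in ball z r, (∫⁻ p, H (x, p) ∂upHalf μ) ∂μ) ≤ K := by
    have hswap : (∫⁻ x in ball z r, (∫⁻ p, H (x, p) ∂upHalf μ) ∂μ)
        = ∫⁻ p, (∫⁻ x in ball z r, H (x, p) ∂μ) ∂upHalf μ :=
      lintegral_lintegral_swap hHm.aemeasurable
    rw [hswap, hK]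
    calc (∫⁻ p, (∫⁻ x in ball z r, H (x, p) ∂μ) ∂upHalf μ)
        ≤ ∫⁻ p, Set.indicator (tentOver α (ball z R))
            (fun p => ENNReal.ofReal (|g p| ^ q)) p ∂upHalf μ := lintegral_mono hinner
      _ = ∫⁻ p in tentOver α (ball z R), ENNReal.ofReal (|g p| ^ q) ∂upHalf μ :=
          lintegral_indicator hT _
  -- case K = ∞ : the Carleson functional is infinite on B
  by_cases hKtop : K = ∞
  · have hBsub : ball z r ⊆ {x ∈ ball z r |
        AfunT μ q α r g x ≤ ENNReal.ofReal ((2 * D) ^ (1 / q)) * Cfun μ q α g x} := by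
      intro x hx
      refine ⟨hx, ?_⟩
      have h1 := hCf x hx
      have h2 : (μ (ball z R))⁻¹ * K = ∞ := by
        rw [hKtop, ENNReal.mul_top (ENNReal.inv_ne_zero.2 hfinB'.ne)]
      rw [h2, ENNReal.top_rpow_of_pos hqinv] at h1
      rw [top_le_iff.1 h1,
        ENNReal.mul_top (ENNReal.ofReal_pos.2 (Real.rpow_pos_of_pos hD0 _)).ne']
      exact le_top
    calc ENNReal.ofReal (1 / 2) * μ (ball z r) ≤ 1 * μ (ball z r) :=
          mul_le_mul_left (ENNReal.ofReal_le_one.2 (by norm_num)) _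
      _ = μ (ball z r) := one_mul _
      _ ≤ _ := measure_mono hBsub
  -- case K < ∞
  · set lam : ℝ≥0∞ := ENNReal.ofReal (2 * D) * ((μ (ball z R))⁻¹ * K) with hlam
    have hbadm : MeasurableSet {x : X | lam < ∫⁻ p, H (x, p) ∂upHalf μ} :=
      measurableSet_lt measurable_const hfm
    -- bound on the bad set
    have hbad : μ (ball z r ∩ {x : X | lam < ∫⁻ p, H (x, p) ∂upHalf μ})
        ≤ 2⁻¹ * μ (ball z r) := by
      by_cases hK0 : K = 0
      · have hzero : (∫⁻ x in ball z r, (∫⁻ p, H (x, p) ∂upHalf μ) ∂μ) = 0 :=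
          le_antisymm (hmain.trans hK0.le) (zero_le)
        have hae := (lintegral_eq_zero_iff hfm).1 hzero
        have hnull : (μ.restrict (ball z r))
            {x : X | lam < ∫⁻ p, H (x, p) ∂upHalf μ} = 0 := by
          refine measure_mono_null ?_ (ae_iff.1 hae)
          intro x hx
          exact (lt_of_le_of_lt (zero_le) hx).ne'
        rw [Set.inter_comm, ← Measure.restrict_apply hbadm, hnull]
        exact zero_le
      · have hlam0 : lam ≠ 0 := by
          rw [hlam]
          exact mul_ne_zero ((ENNReal.ofReal_pos.2 hD0).ne')
            (mul_ne_zero (ENNReal.inv_ne_zero.2 hfinB'.ne) hK0)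
        have hlamtop : lam ≠ ∞ := by
          rw [hlam]
          exact ENNReal.mul_ne_top ENNReal.ofReal_ne_top
            (ENNReal.mul_ne_top (ENNReal.inv_ne_top.2 hposB'.ne') hKtop)
        have hmarkov := mul_meas_ge_le_lintegral₀ (μ := μ.restrict (ball z r))
          hfm.aemeasurable lam
        have hm1 : μ (ball z r ∩ {x : X | lam < ∫⁻ p, H (x, p) ∂upHalf μ})
            ≤ (μ.restrict (ball z r)) {x : X | lam ≤ ∫⁻ p, H (x, p) ∂upHalf μ} := by
          rw [Measure.restrict_apply (measurableSet_le measurable_const hfm)]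
          refine measure_mono fun x hx => ⟨?_, hx.1⟩
          have h2 : lam < ∫⁻ p, H (x, p) ∂upHalf μ := hx.2
          exact Set.mem_setOf_eq ▸ h2.le
        have hm2 : lam * (μ.restrict (ball z r))
            {x : X | lam ≤ ∫⁻ p, H (x, p) ∂upHalf μ} ≤ K := hmarkov.trans hmain
        -- from lam * m ≤ K and K ≤ lam * (2⁻¹ μ B), conclude m ≤ 2⁻¹ μ B
        have hKle : K ≤ lam * (2⁻¹ * μ (ball z r)) := by
          have h2D : ENNReal.ofReal (2 * D) = 2 * ENNReal.ofReal D := by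
            rw [ENNReal.ofReal_mul (by norm_num : (0:ℝ) ≤ 2), ENNReal.ofReal_ofNat]
          calc K = ((μ (ball z R))⁻¹ * μ (ball z R)) * K := by
                rw [ENNReal.inv_mul_cancel hposB'.ne' hfinB'.ne, one_mul]
            _ ≤ ((μ (ball z R))⁻¹ * (ENNReal.ofReal D * μ (ball z r))) * K :=
                mul_le_mul_left (mul_le_mul_right hBB' _) _
            _ = (2 * 2⁻¹) * (ENNReal.ofReal D * ((μ (ball z R))⁻¹
                  * (K * μ (ball z r)))) := by
                rw [ENNReal.mul_inv_cancel (by norm_num) (by norm_num)]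
                ring
            _ = lam * (2⁻¹ * μ (ball z r)) := by
                rw [hlam, h2D]; ring
        calc μ (ball z r ∩ {x : X | lam < ∫⁻ p, H (x, p) ∂upHalf μ})
            ≤ (μ.restrict (ball z r)) {x : X | lam ≤ ∫⁻ p, H (x, p) ∂upHalf μ} := hm1
          _ = lam⁻¹ * (lam * (μ.restrict (ball z r))
              {x : X | lam ≤ ∫⁻ p, H (x, p) ∂upHalf μ}) := by
              rw [← mul_assoc, ENNReal.inv_mul_cancel hlam0 hlamtop, one_mul]
          _ ≤ lam⁻¹ * (lam * (2⁻¹ * μ (ball z r))) :=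
              mul_le_mul_right (hm2.trans hKle) _
          _ = 2⁻¹ * μ (ball z r) := by
              rw [← mul_assoc, ENNReal.inv_mul_cancel hlam0 hlamtop, one_mul]
    -- the good set has large measure
    have hgood : 2⁻¹ * μ (ball z r)
        ≤ μ (ball z r \ {x : X | lam < ∫⁻ p, H (x, p) ∂upHalf μ}) := by
      have hsplit := measure_inter_add_diff (ball z r) hbadm (μ := μ)
      have hfinhalf : 2⁻¹ * μ (ball z r) ≠ ∞ :=
        ENNReal.mul_ne_top (by norm_num) hfinB.ne
      have h1 : 2⁻¹ * μ (ball z r) + 2⁻¹ * μ (ball z r)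
          ≤ 2⁻¹ * μ (ball z r) + μ (ball z r \ {x : X | lam < ∫⁻ p, H (x, p) ∂upHalf μ}) := by
        calc 2⁻¹ * μ (ball z r) + 2⁻¹ * μ (ball z r)
            = μ (ball z r) := by
              rw [← add_mul, ENNReal.inv_two_add_inv_two, one_mul]
          _ = μ (ball z r ∩ {x : X | lam < ∫⁻ p, H (x, p) ∂upHalf μ})
              + μ (ball z r \ {x : X | lam < ∫⁻ p, H (x, p) ∂upHalf μ}) := hsplit.symm
          _ ≤ _ := add_le_add_left hbad _
      exact (ENNReal.add_le_add_iff_left hfinhalf).1 h1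
    -- the good set is contained in the target set
    have hsub : ball z r \ {x : X | lam < ∫⁻ p, H (x, p) ∂upHalf μ}
        ⊆ {x ∈ ball z r |
            AfunT μ q α r g x ≤ ENNReal.ofReal ((2 * D) ^ (1 / q)) * Cfun μ q α g x} := by
      rintro x ⟨hxB, hxf⟩
      refine ⟨hxB, ?_⟩
      rw [hfeq x]
      have hfx : (∫⁻ p, H (x, p) ∂upHalf μ) ≤ lam := not_lt.1 hxf
      calc (∫⁻ p, H (x, p) ∂upHalf μ) ^ (1 / q) ≤ lam ^ (1 / q) :=
            ENNReal.rpow_le_rpow hfx hqinv.le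
        _ = ENNReal.ofReal ((2 * D) ^ (1 / q)) * ((μ (ball z R))⁻¹ * K) ^ (1 / q) := by
            rw [hlam, ENNReal.mul_rpow_of_nonneg _ _ hqinv.le,
              ENNReal.ofReal_rpow_of_pos hD0]
        _ ≤ ENNReal.ofReal ((2 * D) ^ (1 / q)) * Cfun μ q α g x :=
            mul_le_mul_right (hCf x hxB) _
    have hhalf : ENNReal.ofReal (1 / 2) = (2 : ℝ≥0∞)⁻¹ := by
      rw [one_div, ENNReal.ofReal_inv_of_pos (by norm_num : (0:ℝ) < 2),
        ENNReal.ofReal_ofNat]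
    calc ENNReal.ofReal (1 / 2) * μ (ball z r) = 2⁻¹ * μ (ball z r) := by rw [hhalf]
      _ ≤ μ (ball z r \ {x : X | lam < ∫⁻ p, H (x, p) ∂upHalf μ}) := hgood
      _ ≤ _ := measure_mono hsub
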